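/- There is a constant c > 0 such that for every n ≥ 2 and every p ≥ 1: if the monotone norm N on ℝⁿ defined by N(x) = ‖x‖₁ + ‖x‖₂ is p-supermodular, then p ≥ c·√n. -/

import Mathlib

set_option maxHeartbeats 1000000

noncomputable section

/-- `N` is `p`-supermodular: `N(u+v+w)^p − N(u+v)^p ≥ N(u+w)^p − N(u)^p` for all
nonnegative `u, v, w`. -/
def IsPSupermodular {n : ℕ} (N : (Fin n → ℝ) → ℝ) (p : ℝ) : Prop :=
  ∀ u v w : Fin n → ℝ, 0 ≤ u → 0 ≤ v → 0 ≤ w →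
    N (u + w) ^ p - N u ^ p ≤ N (u + v + w) ^ p - N (u + v) ^ p

/-- Quadratic upper bound for the exponential on `[-1, 1]`. -/
lemma exp_quad {z : ℝ} (hz : |z| ≤ 1) : Real.exp z ≤ 1 + z + (3/4) * z ^ 2 := by
  have h := Real.exp_bound hz (n := 2) (by norm_num)
  have hs : ∑ m ∈ Finset.range 2, z ^ m / m.factorial = 1 + z := by
    simp [Finset.sum_range_succ]
  rw [hs] at h
  have h1 := (abs_sub_le_iff.1 h).1
  norm_num [Nat.factorial] at h1
  nlinarith only [h1, sq_abs z]

/-- The analytic core: violation of midpoint convexity for small `p`. -/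
lemma core_aux {t p s2 s3 : ℝ} (ht : 100 ≤ t) (hp : 1 ≤ p) (hpt : p * 100 < t)
    (hs2sq : s2 ^ 2 = 2) (hs2nn : 0 ≤ s2) (hs3sq : s3 ^ 2 = 3) (hs3nn : 0 ≤ s3) :
    (t+1)^p + (t+2+s3)^p < 2 * (t+1+s2)^p := by
  have hs2l : 1.414 ≤ s2 := by nlinarith only [hs2sq, hs2nn]
  have hs2u : s2 ≤ 1.415 := by nlinarith only [hs2sq, hs2nn]
  have hs3l : 1.732 ≤ s3 := by nlinarith only [hs3sq, hs3nn]
  have hs3u : s3 ≤ 1.7321 := by nlinarith only [hs3sq, hs3nn]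
  obtain ⟨B, hBdef⟩ : ∃ B : ℝ, B = t + 1 + s2 := ⟨_, rfl⟩
  have hB : (100 : ℝ) < B := by rw [hBdef]; linarith only [ht, hs2nn]
  have hB0 : (0 : ℝ) < B := by linarith only [hB]
  obtain ⟨x, hxdef⟩ : ∃ x : ℝ, x = s2 / B := ⟨_, rfl⟩
  obtain ⟨y, hydef⟩ : ∃ y : ℝ, y = (1 + s3 - s2) / B := ⟨_, rfl⟩
  have hxB : x * B = s2 := by rw [hxdef]; exact div_mul_cancel₀ _ hB0.ne'
  have hyB : y * B = 1 + s3 - s2 := by rw [hydef]; exact div_mul_cancel₀ _ hB0.ne'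
  have hx0 : 0 < x := by rw [hxdef]; exact div_pos (by linarith only [hs2l]) hB0
  have hy0 : 0 < y := by rw [hydef]; exact div_pos (by linarith only [hs2u, hs3l]) hB0
  have hyx : y < x := by nlinarith only [hxB, hyB, hB0, hs2l, hs3u]
  have hpB : p * 100 < B := by rw [hBdef]; linarith only [hpt, hs2nn]
  have hp0 : (0 : ℝ) < p := by linarith only [hp]
  have hps2 : p * s2 ≤ (B / 100) * 1.415 := by
    nlinarith only [mul_le_mul_of_nonneg_left hs2u hp0.le, hpB, hp0]
  have hpxB : (p * x) * B = p * s2 := by rw [mul_assoc, hxB]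
  have hpx' : p * x ≤ 0.01415 := by nlinarith only [hpxB, hps2, hB0]
  have hpx1 : p * x ≤ 1 := by linarith only [hpx']
  have hpy1 : p * y ≤ 1 := by
    linarith only [mul_le_mul_of_nonneg_left hyx.le hp0.le, hpx']
  have hxu : x < 0.0142 := by nlinarith only [hxB, hs2u, hB, hB0]
  have h1x : (0 : ℝ) < 1 - x := by linarith only [hxu]
  -- rpow estimates
  have e1 : (1 - x) ^ p ≤ Real.exp (-(p * x)) := by
    rw [Real.rpow_def_of_pos h1x]
    apply Real.exp_le_exp.mpr
    have hlog := Real.log_le_sub_one_of_pos h1x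
    nlinarith only [mul_le_mul_of_nonneg_left hlog hp0.le]
  have e2 : Real.exp (-(p * x)) ≤ 1 - p * x + (3/4) * (p * x) ^ 2 := by
    have habs : |(-(p * x))| ≤ 1 := by
      rw [abs_neg, abs_of_nonneg (by positivity)]; exact hpx1
    have h := exp_quad habs
    nlinarith only [h]
  have h1y : (0 : ℝ) < 1 + y := by linarith only [hy0]
  have e3 : (1 + y) ^ p ≤ Real.exp (p * y) := by
    rw [Real.rpow_def_of_pos h1y]
    apply Real.exp_le_exp.mpr
    have hlog := Real.log_le_sub_one_of_pos h1y
    nlinarith only [mul_le_mul_of_nonneg_left hlog hp0.le]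
  have e4 : Real.exp (p * y) ≤ 1 + p * y + (3/4) * (p * y) ^ 2 := by
    have habs : |(p * y)| ≤ 1 := by
      rw [abs_of_nonneg (by positivity)]; exact hpy1
    have h := exp_quad habs
    nlinarith only [h]
  -- quadratic inequality
  have hB2 : (0:ℝ) < B ^ 2 := by positivity
  have e : x ^ 2 * B ^ 2 = 2 := by rw [← mul_pow, hxB]; exact hs2sq
  have e' : p * x ^ 2 * B ^ 2 = 2 * p := by linear_combination p * e
  have eg : (x - y) * B = 2 * s2 - 1 - s3 := by linear_combination hxB - hyB
  have eg' : (x - y) * B ^ 2 = (2 * s2 - 1 - s3) * B := by linear_combination B * eg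
  have hgl : (0.09 : ℝ) ≤ 2 * s2 - 1 - s3 := by linarith only [hs2l, hs3u]
  have h09 : 0.09 * B ≤ (2 * s2 - 1 - s3) * B := mul_le_mul_of_nonneg_right hgl hB0.le
  have hq2 : (3/2) * p * x ^ 2 < x - y := by
    nlinarith only [e', eg', h09, hpB, hB0, hB2]
  have hy2 : y ^ 2 ≤ x ^ 2 := by nlinarith only [hyx, hy0, hx0]
  have hq : (3/4) * p * (x ^ 2 + y ^ 2) < x - y := by
    linarith only [mul_le_mul_of_nonneg_left hy2 hp0.le, hq2]
  have key : (1 - x) ^ p + (1 + y) ^ p < 2 := by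
    linarith only [e1, e2, e3, e4, mul_lt_mul_of_pos_left hq hp0]
  -- assemble
  have hA : t + 1 = B * (1 - x) := by linear_combination hxB - hBdef
  have hC : t + 2 + s3 = B * (1 + y) := by linear_combination -hyB - hBdef
  have hBp : (0 : ℝ) < B ^ p := Real.rpow_pos_of_pos hB0 p
  have hgoalB : t + 1 + s2 = B := hBdef.symm
  calc (t+1)^p + (t+2+s3)^p = B ^ p * ((1-x)^p + (1+y)^p) := by
        rw [hA, hC, Real.mul_rpow hB0.le h1x.le, Real.mul_rpow hB0.le h1y.le]; ring
    _ < B ^ p * 2 := (mul_lt_mul_iff_right₀ hBp).mpr key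
    _ = 2 * (t+1+s2) ^ p := by rw [hgoalB]; ring

lemma core {t p : ℝ} (ht : 100 ≤ t) (hp : 1 ≤ p) (hpt : p * 100 < t) :
    (t+1)^p + (t+2+Real.sqrt 3)^p < 2 * (t+1+Real.sqrt 2)^p :=
  core_aux ht hp hpt (Real.sq_sqrt (by norm_num)) (Real.sqrt_nonneg 2)
    (Real.sq_sqrt (by norm_num)) (Real.sqrt_nonneg 3)

/-- A vector in `ℝⁿ` with value `a` at index 0, `b` at index 1, `c` elsewhere. -/
def vec (n : ℕ) (a b c : ℝ) : Fin n → ℝ :=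
  fun i => if i.val = 0 then a else if i.val = 1 then b else c

lemma sum_vec {n : ℕ} (hn : 2 ≤ n) (a b c : ℝ) :
    ∑ i : Fin n, vec n a b c i = a + b + ((n : ℝ) - 2) * c := by
  haveI : NeZero n := ⟨by omega⟩
  have h0 : ((0 : Fin n) : ℕ) = 0 := rfl
  have h1 : ((1 : Fin n) : ℕ) = 1 := by
    simp [Fin.val_one', Nat.mod_eq_of_lt (by omega : 1 < n)]
  have key : ∀ i : Fin n, vec n a b c i =
      c + (if i = (0 : Fin n) then a - c else 0) + (if i = (1 : Fin n) then b - c else 0) := by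
    intro i
    have e0 : i = (0 : Fin n) ↔ (i : ℕ) = 0 := by rw [Fin.ext_iff, h0]
    have e1 : i = (1 : Fin n) ↔ (i : ℕ) = 1 := by rw [Fin.ext_iff, h1]
    unfold vec
    by_cases hi0 : (i : ℕ) = 0
    · simp [hi0, e0, e1]
    · by_cases hi1 : (i : ℕ) = 1
      · simp [hi0, hi1, e0, e1]
      · simp [hi0, hi1, e0, e1]
  rw [Finset.sum_congr rfl (fun i _ => key i)]
  rw [Finset.sum_add_distrib, Finset.sum_add_distrib, Finset.sum_const,
    Finset.sum_ite_eq' Finset.univ (0 : Fin n) (fun _ => a - c),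
    Finset.sum_ite_eq' Finset.univ (1 : Fin n) (fun _ => b - c)]
  simp [Finset.card_univ]
  ring

lemma vec_add {n : ℕ} (a b c a' b' c' : ℝ) :
    vec n a b c + vec n a' b' c' = vec n (a + a') (b + b') (c + c') := by
  funext i
  simp only [Pi.add_apply, vec]
  split_ifs <;> ring

lemma vec_nonneg {n : ℕ} {a b c : ℝ} (ha : 0 ≤ a) (hb : 0 ≤ b) (hc : 0 ≤ c) :
    (0 : Fin n → ℝ) ≤ vec n a b c := by
  intro i
  simp only [Pi.zero_apply, vec]
  split_ifs <;> assumption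

lemma N_vec {n : ℕ} (hn : 2 ≤ n) {a b c : ℝ} (ha : 0 ≤ a) (hb : 0 ≤ b) (hc : 0 ≤ c) :
    (∑ i, |vec n a b c i|) + Real.sqrt (∑ i, (vec n a b c i) ^ 2)
      = a + b + ((n:ℝ) - 2) * c + Real.sqrt (a^2 + b^2 + ((n:ℝ) - 2) * c^2) := by
  have h1 : ∀ i : Fin n, |vec n a b c i| = vec n a b c i := by
    intro i; apply abs_of_nonneg; simp only [vec]; split_ifs <;> assumption
  have h2 : ∀ i : Fin n, (vec n a b c i) ^ 2 = vec n (a^2) (b^2) (c^2) i := by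
    intro i; simp only [vec]; split_ifs <;> rfl
  rw [Finset.sum_congr rfl (fun i _ => h1 i), sum_vec hn,
      Finset.sum_congr rfl (fun i _ => h2 i), sum_vec hn]

/-- The norm `‖x‖₁ + ‖x‖₂` on ℝⁿ is not `p`-supermodular unless `p = Ω(√n)`. -/
theorem l1_plus_l2_not_pSupermodular :
    ∃ c : ℝ, 0 < c ∧ ∀ n : ℕ, 2 ≤ n → ∀ p : ℝ, 1 ≤ p →
      IsPSupermodular
        (fun x : Fin n → ℝ => (∑ i, |x i|) + Real.sqrt (∑ i, x i ^ 2)) p →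
      c * Real.sqrt n ≤ p := by
  refine ⟨1/300, by norm_num, ?_⟩
  intro n hn2 p hp1 hsup
  by_cases hsmall : Real.sqrt n ≤ 300
  · have h0 := Real.sqrt_nonneg (n : ℝ)
    linarith
  · push_neg at hsmall
    by_contra hcon
    push_neg at hcon
    have hnn : (0:ℝ) ≤ (n:ℝ) := by positivity
    have hsq : (Real.sqrt n) ^ 2 = (n:ℝ) := Real.sq_sqrt hnn
    have hnR : (90000:ℝ) < (n:ℝ) := by
      nlinarith only [hsq, hsmall, Real.sqrt_nonneg (n:ℝ)]
    have hn2R : (0:ℝ) ≤ (n:ℝ) - 2 := by linarith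
    obtain ⟨t, htdef⟩ : ∃ t : ℝ, t = Real.sqrt ((n:ℝ) - 2) := ⟨_, rfl⟩
    have htnn : 0 ≤ t := htdef ▸ Real.sqrt_nonneg _
    have ht2 : t ^ 2 = (n:ℝ) - 2 := by rw [htdef]; exact Real.sq_sqrt hn2R
    have ht100 : (100:ℝ) ≤ t := by nlinarith only [ht2, htnn, hnR]
    have ht0 : (0:ℝ) < t := by linarith
    have hsn : Real.sqrt n ≤ 3 * t := by
      nlinarith only [hsq, ht2, htnn, Real.sqrt_nonneg (n:ℝ), hnR]
    have hpt : p * 100 < t := by linarith only [hcon, hsn]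
    have hc : (0:ℝ) ≤ 1 / t := by positivity
    -- instantiate supermodularity at u = (0,0,1/t,…,1/t), v = e₀, w = e₁
    have h := hsup (vec n 0 0 (1/t)) (vec n 1 0 0) (vec n 0 1 0)
      (vec_nonneg le_rfl le_rfl hc) (vec_nonneg zero_le_one le_rfl le_rfl)
      (vec_nonneg le_rfl zero_le_one le_rfl)
    dsimp only at h
    rw [vec_add, vec_add, vec_add] at h
    simp only [zero_add, add_zero] at h
    rw [N_vec hn2 le_rfl le_rfl hc, N_vec hn2 le_rfl zero_le_one hc,
        N_vec hn2 zero_le_one zero_le_one hc, N_vec hn2 zero_le_one le_rfl hc] at h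
    -- simplify the four norm values
    have hv1 : (0:ℝ) + 0 + ((n:ℝ)-2) * (1/t) + Real.sqrt (0^2 + 0^2 + ((n:ℝ)-2) * (1/t)^2)
        = t + 1 := by
      rw [← ht2]
      have e1 : t^2 * (1/t) = t := by field_simp
      have e2 : (0:ℝ)^2 + 0^2 + t^2 * (1/t)^2 = 1 := by field_simp; ring
      rw [e1, e2, Real.sqrt_one]; ring
    have hv2 : (0:ℝ) + 1 + ((n:ℝ)-2) * (1/t) + Real.sqrt (0^2 + 1^2 + ((n:ℝ)-2) * (1/t)^2)
        = t + 1 + Real.sqrt 2 := by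
      rw [← ht2]
      have e1 : t^2 * (1/t) = t := by field_simp
      have e2 : (0:ℝ)^2 + 1^2 + t^2 * (1/t)^2 = 2 := by field_simp; ring
      rw [e1, e2]; ring
    have hv3 : (1:ℝ) + 0 + ((n:ℝ)-2) * (1/t) + Real.sqrt (1^2 + 0^2 + ((n:ℝ)-2) * (1/t)^2)
        = t + 1 + Real.sqrt 2 := by
      rw [← ht2]
      have e1 : t^2 * (1/t) = t := by field_simp
      have e2 : (1:ℝ)^2 + 0^2 + t^2 * (1/t)^2 = 2 := by field_simp; ring
      rw [e1, e2]; ring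
    have hv4 : (1:ℝ) + 1 + ((n:ℝ)-2) * (1/t) + Real.sqrt (1^2 + 1^2 + ((n:ℝ)-2) * (1/t)^2)
        = t + 2 + Real.sqrt 3 := by
      rw [← ht2]
      have e1 : t^2 * (1/t) = t := by field_simp
      have e2 : (1:ℝ)^2 + 1^2 + t^2 * (1/t)^2 = 3 := by field_simp; ring
      rw [e1, e2]; ring
    rw [hv1, hv2, hv3, hv4] at h
    have hcore := core ht100 hp1 hpt
    linarith only [h, hcore]

end
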